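/- Let d be odd and Δ ≥ 2. In the Petersen-graph ILP construction with right-hand side b (block-row j equal to Δ^{j-1}·(1,…,1)), every nonnegative integer solution x of Ax = b satisfies ‖x − z‖₁ ≥ 13·Σ_{i=1}^{(d-1)/2} Δ^{2i-1}, where z is the fractional solution taking each matching column with coefficient 1/2. -/

import Mathlib

/-- The Petersen graph, presented as the Kneser graph `K(5,2)`: vertices are the
2-element subsets of `Fin 5`, adjacent iff disjoint. -/
def Petersen : SimpleGraph {s : Finset (Fin 5) // s.card = 2} where
  Adj a b := Disjoint a.1 b.1
  symm := ⟨fun a b h => h.symm⟩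
  loopless := ⟨fun a h => by
    have h := Finset.disjoint_self_iff_empty _ |>.mp h
    have h2 := a.2
    rw [h] at h2
    simp at h2⟩

set_option maxRecDepth 20000
namespace PetersenAux

instance : DecidableRel Petersen.Adj := fun a b => by unfold Petersen; infer_instance

def vmap : Fin 10 → {s : Finset (Fin 5) // s.card = 2} :=
  ![⟨{0,1}, by decide⟩, ⟨{2,3}, by decide⟩, ⟨{0,4}, by decide⟩, ⟨{1,2}, by decide⟩,
    ⟨{3,4}, by decide⟩, ⟨{2,4}, by decide⟩, ⟨{1,4}, by decide⟩, ⟨{1,3}, by decide⟩,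
    ⟨{0,3}, by decide⟩, ⟨{0,2}, by decide⟩]

def pedges : List (Fin 10 × Fin 10) :=
  [(0,1),(1,2),(2,3),(3,4),(4,0),
   (5,7),(7,9),(9,6),(6,8),(8,5),
   (0,5),(1,6),(2,7),(3,8),(4,9)]

def pcover (s : List (Fin 10 × Fin 10)) : Bool :=
  (List.finRange 10).all (fun v => s.any (fun e => e.1 = v || e.2 = v))

lemma vmap_surj : ∀ a : {s : Finset (Fin 5) // s.card = 2}, ∃ i, vmap i = a := by decide

lemma vmap_inj : ∀ i j : Fin 10, vmap i = vmap j → i = j := by decide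

set_option maxRecDepth 10000 in
lemma adj_iff : ∀ i j : Fin 10, Petersen.Adj (vmap i) (vmap j) ↔
    ((i, j) ∈ pedges ∨ (j, i) ∈ pedges) := by decide

lemma pedges_nodup : pedges.Nodup := by decide

lemma pedges_no_rev : ∀ p ∈ pedges, ∀ q ∈ pedges, p.1 = q.2 → p.2 = q.1 → False := by decide

set_option maxRecDepth 10000 in
theorem no2 : ((pedges.sublistsLen 5).filter pcover).all
    (fun s => (((pedges.filter (fun e => e ∉ s)).sublistsLen 5).all (fun t => !pcover t)))
    = true := by decide

end PetersenAux

namespace PetersenAux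

lemma pm_card (M : Petersen.Subgraph) (h : M.IsPerfectMatching) :
    (M.edgeSet.toFinite.toFinset).card = 5 := by
  classical
  set t := M.edgeSet.toFinite.toFinset with ht
  have hends : ∀ e ∈ t, (Finset.univ.filter (· ∈ e)).card = 2 := by
    intro e he
    rw [Set.Finite.mem_toFinset] at he
    induction e with
    | _ a b =>
      have hab : M.Adj a b := SimpleGraph.Subgraph.mem_edgeSet.mp he
      have hne : a ≠ b := (M.adj_sub hab).ne
      have : Finset.univ.filter (· ∈ s(a,b)) = {a, b} := by
        ext v
        simp [Sym2.mem_iff]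
      rw [this, Finset.card_pair hne]
  have hcover : (Finset.univ : Finset {s : Finset (Fin 5) // s.card = 2}) =
      t.biUnion (fun e => Finset.univ.filter (· ∈ e)) := by
    ext v
    simp only [Finset.mem_univ, true_iff, Finset.mem_biUnion, Finset.mem_filter]
    obtain ⟨w, hw, -⟩ := h.1 (h.2 v)
    exact ⟨s(v, w), by rw [Set.Finite.mem_toFinset]; exact hw, trivial,
      Sym2.mem_mk_left v w⟩
  have hdisj : ∀ e₁ ∈ t, ∀ e₂ ∈ t, e₁ ≠ e₂ →
      Disjoint (Finset.univ.filter (· ∈ e₁)) (Finset.univ.filter (· ∈ e₂)) := by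
    intro e₁ he₁ e₂ he₂ hne
    rw [Finset.disjoint_left]
    intro v hv₁ hv₂
    rw [Set.Finite.mem_toFinset] at he₁ he₂
    rw [Finset.mem_filter] at hv₁ hv₂
    obtain ⟨b₁, hb₁⟩ := Sym2.mem_iff_exists.mp hv₁.2
    obtain ⟨b₂, hb₂⟩ := Sym2.mem_iff_exists.mp hv₂.2
    have ha₁ : M.Adj v b₁ := SimpleGraph.Subgraph.mem_edgeSet.mp (hb₁ ▸ he₁)
    have ha₂ : M.Adj v b₂ := SimpleGraph.Subgraph.mem_edgeSet.mp (hb₂ ▸ he₂)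
    obtain ⟨w, -, hu⟩ := h.1 (h.2 v)
    exact hne (by rw [hb₁, hb₂, hu b₁ ha₁, hu b₂ ha₂])
  have h10 : (Finset.univ : Finset {s : Finset (Fin 5) // s.card = 2}).card = 10 := by decide
  rw [hcover, Finset.card_biUnion hdisj, Finset.sum_congr rfl hends, Finset.sum_const,
    smul_eq_mul] at h10
  omega

end PetersenAux

namespace PetersenAux

open scoped Classical in
noncomputable def pmList (M : Petersen.Subgraph) : List (Fin 10 × Fin 10) :=
  pedges.filter (fun e => decide (M.Adj (vmap e.1) (vmap e.2)))

open scoped Classical in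
lemma mem_pmList {M : Petersen.Subgraph} {e : Fin 10 × Fin 10} :
    e ∈ pmList M ↔ e ∈ pedges ∧ M.Adj (vmap e.1) (vmap e.2) := by
  simp [pmList, List.mem_filter]

lemma pmList_nodup (M : Petersen.Subgraph) : (pmList M).Nodup :=
  pedges_nodup.filter _

lemma pmList_length (M : Petersen.Subgraph) (h : M.IsPerfectMatching) :
    (pmList M).length = 5 := by
  classical
  rw [← List.toFinset_card_of_nodup (pmList_nodup M), ← pm_card M h]
  apply Finset.card_bij (fun e _ => s(vmap e.1, vmap e.2))
  · intro e he
    rw [List.mem_toFinset, mem_pmList] at he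
    rw [Set.Finite.mem_toFinset]
    exact SimpleGraph.Subgraph.mem_edgeSet.mpr he.2
  · intro e₁ he₁ e₂ he₂ heq
    rw [List.mem_toFinset, mem_pmList] at he₁ he₂
    rw [Sym2.eq_iff] at heq
    rcases heq with ⟨h1, h2⟩ | ⟨h1, h2⟩
    · exact Prod.ext (vmap_inj _ _ h1) (vmap_inj _ _ h2)
    · exact (pedges_no_rev e₁ he₁.1 e₂ he₂.1 (vmap_inj _ _ h1) (vmap_inj _ _ h2)).elim
  · intro E hE
    rw [Set.Finite.mem_toFinset] at hE
    induction E with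
    | _ a b =>
      have hab : M.Adj a b := SimpleGraph.Subgraph.mem_edgeSet.mp hE
      obtain ⟨i, hi⟩ := vmap_surj a
      obtain ⟨j, hj⟩ := vmap_surj b
      have hadj : Petersen.Adj (vmap i) (vmap j) := by
        rw [hi, hj]; exact M.adj_sub hab
      rcases (adj_iff i j).mp hadj with hm | hm
      · exact ⟨(i, j), List.mem_toFinset.mpr (mem_pmList.mpr ⟨hm, by rw [hi, hj]; exact hab⟩),
          by rw [hi, hj]⟩
      · exact ⟨(j, i), List.mem_toFinset.mpr (mem_pmList.mpr ⟨hm, by rw [hi, hj]; exact hab.symm⟩),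
          by rw [hi, hj, Sym2.eq_swap]⟩

lemma pmList_cover (M : Petersen.Subgraph) (h : M.IsPerfectMatching) :
    pcover (pmList M) = true := by
  classical
  rw [pcover, List.all_eq_true]
  intro v hv
  rw [List.any_eq_true]
  obtain ⟨w, hw, -⟩ := h.1 (h.2 (vmap v))
  obtain ⟨u, hu⟩ := vmap_surj w
  have hadj : Petersen.Adj (vmap v) (vmap u) := by rw [hu]; exact M.adj_sub hw
  rcases (adj_iff v u).mp hadj with hm | hm
  · exact ⟨(v, u), mem_pmList.mpr ⟨hm, by rw [hu]; exact hw⟩, by simp⟩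
  · exact ⟨(u, v), mem_pmList.mpr ⟨hm, by rw [hu]; exact hw.symm⟩, by simp⟩

theorem pm_shared (M₁ M₂ : Petersen.Subgraph)
    (h₁ : M₁.IsPerfectMatching) (h₂ : M₂.IsPerfectMatching) :
    ∃ E, E ∈ M₁.edgeSet ∧ E ∈ M₂.edgeSet := by
  classical
  by_contra hno
  push_neg at hno
  have hmem1 : pmList M₁ ∈ (pedges.sublistsLen 5).filter pcover := by
    rw [List.mem_filter, List.mem_sublistsLen]
    exact ⟨⟨List.filter_sublist, pmList_length M₁ h₁⟩, pmList_cover M₁ h₁⟩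
  have H := List.all_eq_true.mp no2 (pmList M₁) hmem1
  have heq : (pmList M₂).filter (fun e => decide (e ∉ pmList M₁)) = pmList M₂ := by
    apply List.filter_eq_self.mpr
    intro e he
    simp only [decide_eq_true_eq]
    intro he1
    exact hno s(vmap e.1, vmap e.2)
      (SimpleGraph.Subgraph.mem_edgeSet.mpr (mem_pmList.mp he1).2)
      (SimpleGraph.Subgraph.mem_edgeSet.mpr (mem_pmList.mp he).2)
  have hsub : List.Sublist (pmList M₂) (pedges.filter (fun e => decide (e ∉ pmList M₁))) := by
    rw [← heq]
    exact List.Sublist.filter _ List.filter_sublist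
  have hmem2 : pmList M₂ ∈ (pedges.filter (fun e => decide (e ∉ pmList M₁))).sublistsLen 5 :=
    List.mem_sublistsLen.mpr ⟨hsub, pmList_length M₂ h₂⟩
  have H2 := List.all_eq_true.mp H (pmList M₂) hmem2
  rw [pmList_cover M₂ h₂] at H2
  simp at H2

end PetersenAux


open scoped Classical

/-- The `15d × (6+15d)` block matrix of the Petersen-graph construction: the
first 6 columns are `(M; 0; …; 0)` with `M` the edge/matching incidence matrix
of the Petersen graph; the remaining `d` blocks of 15 columns contribute `I₁₅`
in block-row `j` and `Δ·I₁₅` in block-row `j+1`. -/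
noncomputable def blockMatZ (d : ℕ) (Δ : ℤ) (eE : Fin 15 ≃ Petersen.edgeSet)
    (eM : Fin 6 ≃ {M : Petersen.Subgraph // M.IsPerfectMatching}) :
    Matrix (Fin (15 * d)) (Fin (6 + 15 * d)) ℤ :=
  fun r c =>
    if hc : (c : ℕ) < 6 then
      (if hr : (r : ℕ) < 15 then
        (if (eE ⟨(r : ℕ), hr⟩ : Sym2 _) ∈ (eM ⟨(c : ℕ), hc⟩).1.edgeSet then 1 else 0)
      else 0)
    else if (r : ℕ) + 6 = (c : ℕ) then 1
    else if (r : ℕ) + 6 = (c : ℕ) + 15 then Δ else 0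

/-- The right-hand side whose block-row `j` equals `Δ^(j-1) · (1,…,1) ∈ ℤ^15`. -/
def blockRhs (d : ℕ) (Δ : ℤ) : Fin (15 * d) → ℤ := fun r => Δ ^ ((r : ℕ) / 15)

/-- The fractional solution of the Petersen-graph construction: each of the 6
matching columns with coefficient `1/2`, each odd block of identity columns
(0-indexed: each even block) with coefficient `0`, and each even block `j`
(0-indexed: odd block `j'`) with coefficient `Δ^{j'}`. -/
def fracSol (d : ℕ) (Δ : ℤ) : Fin (6 + 15 * d) → ℚ := fun c =>
  if (c : ℕ) < 6 then 1 / 2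
  else if Odd (((c : ℕ) - 6) / 15) then (Δ : ℚ) ^ (((c : ℕ) - 6) / 15) else 0

namespace StmtAux

variable {d : ℕ} {Δ : ℤ} {eE : Fin 15 ≃ Petersen.edgeSet}
  {eM : Fin 6 ≃ {M : Petersen.Subgraph // M.IsPerfectMatching}}

lemma entry_match (r : Fin (15 * d)) (i : Fin 6) :
    blockMatZ d Δ eE eM r (Fin.castAdd (15 * d) i) =
      if h15 : (r : ℕ) < 15 then
        (if (eE ⟨(r : ℕ), h15⟩ : Sym2 _) ∈ (eM i).1.edgeSet then 1 else 0)
      else 0 := by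
  simp only [blockMatZ, Fin.coe_castAdd]
  rw [dif_pos i.isLt]

lemma entry_block (r : Fin (15 * d)) (c' : Fin (15 * d)) :
    blockMatZ d Δ eE eM r (Fin.natAdd 6 c') =
      if (r : ℕ) = (c' : ℕ) then 1 else if (r : ℕ) = (c' : ℕ) + 15 then Δ else 0 := by
  simp only [blockMatZ, Fin.coe_natAdd]
  rw [dif_neg (by omega)]
  split_ifs <;> omega

lemma blockSum (x : Fin (6 + 15 * d) → ℤ) (r : ℕ) (hr : r < 15 * d) :
    ∑ c' : Fin (15 * d),
        (if r = (c' : ℕ) then (1 : ℤ) else if r = (c' : ℕ) + 15 then Δ else 0) *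
          x (Fin.natAdd 6 c') =
      x ⟨6 + r, by omega⟩ + (if 15 ≤ r then Δ * x ⟨6 + (r - 15), by omega⟩ else 0) := by
  have split : ∀ c' : Fin (15 * d),
      (if r = (c' : ℕ) then (1 : ℤ) else if r = (c' : ℕ) + 15 then Δ else 0) *
          x (Fin.natAdd 6 c') =
        (if r = (c' : ℕ) then x (Fin.natAdd 6 c') else 0) +
          (if r = (c' : ℕ) + 15 then Δ * x (Fin.natAdd 6 c') else 0) := by
    intro c'
    by_cases h1 : r = (c' : ℕ)
    · have h2 : ¬ r = (c' : ℕ) + 15 := by omega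
      simp [h1, h2]
    · by_cases h2 : r = (c' : ℕ) + 15 <;> simp [h1, h2]
  rw [Finset.sum_congr rfl (fun c' _ => split c'), Finset.sum_add_distrib]
  congr 1
  · rw [Finset.sum_eq_single_of_mem (⟨r, hr⟩ : Fin (15 * d)) (Finset.mem_univ _)
      (fun b _ hb => if_neg (fun hc => hb (Fin.ext hc.symm)))]
    rw [if_pos rfl]
    rfl
  · by_cases h15 : 15 ≤ r
    · rw [Finset.sum_eq_single_of_mem (⟨r - 15, by omega⟩ : Fin (15 * d)) (Finset.mem_univ _)
        (fun b _ hb => if_neg (fun hc => hb (Fin.ext (show (b : ℕ) = r - 15 by omega))))]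
      rw [if_pos (show r = (r - 15) + 15 by omega), if_pos h15]
      rfl
    · rw [if_neg h15, Finset.sum_eq_zero]
      intro b _
      exact if_neg (by omega)

lemma rowGen (x : Fin (6 + 15 * d) → ℤ)
    (hsol : (blockMatZ d Δ eE eM).mulVec x = blockRhs d Δ) (r : ℕ) (hr : r < 15 * d) :
    (if h15 : r < 15 then
        ∑ m : Fin 6, (if (eE ⟨r, h15⟩ : Sym2 _) ∈ (eM m).1.edgeSet then (1 : ℤ) else 0) *
          x (Fin.castAdd (15 * d) m)
      else 0)
      + x ⟨6 + r, by omega⟩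
      + (if 15 ≤ r then Δ * x ⟨6 + (r - 15), by omega⟩ else 0) = Δ ^ (r / 15) := by
  have h := congrFun hsol ⟨r, hr⟩
  simp only [Matrix.mulVec, dotProduct, blockRhs] at h
  rw [Fin.sum_univ_add] at h
  simp only [entry_match, entry_block] at h
  rw [blockSum x r hr] at h
  rw [← add_assoc] at h
  by_cases h15 : r < 15
  · rw [dif_pos h15]
    simp only [dif_pos h15] at h
    exact h
  · rw [dif_neg h15]
    simp only [dif_neg h15, zero_mul, Finset.sum_const_zero] at h
    simpa using h

lemma row0 (x : Fin (6 + 15 * d) → ℤ)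
    (hsol : (blockMatZ d Δ eE eM).mulVec x = blockRhs d Δ) (hd0 : 0 < d)
    (e : ℕ) (he : e < 15) :
    (∑ m : Fin 6, (if (eE ⟨e, he⟩ : Sym2 _) ∈ (eM m).1.edgeSet then (1 : ℤ) else 0) *
        x (Fin.castAdd (15 * d) m)) + x ⟨6 + e, by omega⟩ = 1 := by
  have h := rowGen x hsol e (by omega)
  rw [dif_pos he, if_neg (by omega), Nat.div_eq_of_lt he] at h
  simpa using h

lemma rowS (x : Fin (6 + 15 * d) → ℤ)
    (hsol : (blockMatZ d Δ eE eM).mulVec x = blockRhs d Δ)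
    (j e : ℕ) (hj1 : 1 ≤ j) (hj : j < d) (he : e < 15) :
    x ⟨6 + (15 * j + e), by omega⟩ + Δ * x ⟨6 + (15 * (j - 1) + e), by omega⟩ = Δ ^ j := by
  have h := rowGen x hsol (15 * j + e) (by omega)
  rw [dif_neg (by omega), if_pos (by omega)] at h
  have h1 : (15 * j + e) / 15 = j := by omega
  have h2 : 15 * j + e - 15 = 15 * (j - 1) + e := by omega
  rw [h1] at h
  have hidx : (⟨6 + (15 * j + e - 15), by omega⟩ : Fin (6 + 15 * d)) =
      ⟨6 + (15 * (j - 1) + e), by omega⟩ := Fin.ext (by simp; omega)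
  rw [hidx] at h
  simpa using h

lemma rowS' (x : Fin (6 + 15 * d) → ℤ)
    (hsol : (blockMatZ d Δ eE eM).mulVec x = blockRhs d Δ)
    (j e : ℕ) (hj : j + 1 < d) (he : e < 15) :
    x ⟨6 + (15 * (j + 1) + e), by omega⟩ + Δ * x ⟨6 + (15 * j + e), by omega⟩ = Δ ^ (j + 1) :=
  rowS x hsol (j + 1) e (by omega) hj he

lemma geom_expand (q : ℚ) (k : ℕ) :
    ∑ j ∈ Finset.range (2 * k + 1), q ^ j =
      1 + ∑ i ∈ Finset.range k, (q ^ (2 * i + 1) + q ^ (2 * i + 2)) := by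
  induction k with
  | zero => simp
  | succ n ih =>
    rw [show 2 * (n + 1) + 1 = (2 * n + 1) + 1 + 1 by ring, Finset.sum_range_succ,
      Finset.sum_range_succ, ih, Finset.sum_range_succ]
    ring

lemma sum_block_split (f : ℕ → ℚ) (n : ℕ) :
    ∑ r ∈ Finset.range (15 * n), f r =
      ∑ j ∈ Finset.range n, ∑ e ∈ Finset.range 15, f (15 * j + e) := by
  induction n with
  | zero => simp
  | succ n ih =>
    rw [show 15 * (n + 1) = 15 * n + 15 by ring]
    rw [Finset.sum_range_add f (15 * n) 15]
    rw [ih, Finset.sum_range_succ (fun j => ∑ e ∈ Finset.range 15, f (15 * j + e)) n]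
end StmtAux

/-- Every nonnegative integer solution `x` of the Petersen-graph ILP satisfies
`‖x − z‖₁ ≥ 13 · Σ_{i=1}^{(d-1)/2} Δ^{2i-1}`, where `z` is the fractional
solution taking each matching column with coefficient `1/2`. -/
theorem stmt14 (d : ℕ) (hd : Odd d) (Δ : ℤ) (hΔ : 2 ≤ Δ)
    (eE : Fin 15 ≃ Petersen.edgeSet)
    (eM : Fin 6 ≃ {M : Petersen.Subgraph // M.IsPerfectMatching})
    (x : Fin (6 + 15 * d) → ℤ) (hx : ∀ c, 0 ≤ x c)
    (hsol : (blockMatZ d Δ eE eM).mulVec x = blockRhs d Δ) :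
    13 * (∑ i ∈ Finset.range ((d - 1) / 2), (Δ : ℚ) ^ (2 * i + 1)) ≤
      ∑ c, |(x c : ℚ) - fracSol d Δ c| := by
  classical
  obtain ⟨k, hk⟩ := hd
  have hd0 : 0 < d := by omega
  have hq2 : (2 : ℚ) ≤ (Δ : ℚ) := by exact_mod_cast hΔ
  have hq0 : (0 : ℚ) ≤ (Δ : ℚ) := by linarith
  set tval : ℕ → ℤ := fun e => if h : e < 15 then x ⟨6 + e, by omega⟩ else 0 with htval
  set aval : ℕ → Fin 6 → ℤ := fun e m =>
    if h : e < 15 then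
      (if (eE ⟨e, h⟩ : Sym2 _) ∈ (eM m).1.edgeSet then (1 : ℤ) else 0)
    else 0 with haval
  have htv : ∀ (e : ℕ) (he : e < 15), tval e = x ⟨6 + e, by omega⟩ := by
    intro e he; simp only [htval]; rw [dif_pos he]
  have hav : ∀ (e : ℕ) (he : e < 15) (m : Fin 6),
      aval e m = if (eE ⟨e, he⟩ : Sym2 _) ∈ (eM m).1.edgeSet then (1 : ℤ) else 0 := by
    intro e he m; simp only [haval]; rw [dif_pos he]
  have row0' : ∀ (e : ℕ) (he : e < 15),
      (∑ m : Fin 6, aval e m * x (Fin.castAdd (15 * d) m)) + tval e = 1 := by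
    intro e he
    rw [htv e he, Finset.sum_congr rfl (fun m _ => by rw [hav e he m])]
    exact StmtAux.row0 x hsol hd0 e he
  have havnn : ∀ (e : ℕ) (m : Fin 6), 0 ≤ aval e m := by
    intro e m; simp only [haval]; split_ifs <;> norm_num
  have htermnn : ∀ (e : ℕ) (m : Fin 6), 0 ≤ aval e m * x (Fin.castAdd (15 * d) m) :=
    fun e m => mul_nonneg (havnn e m) (hx _)
  have htnn : ∀ e : ℕ, 0 ≤ tval e := by
    intro e; simp only [htval]; split_ifs
    · exact hx _
    · exact le_refl 0
  have hsumnn : ∀ e : ℕ, 0 ≤ ∑ m : Fin 6, aval e m * x (Fin.castAdd (15 * d) m) :=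
    fun e => Finset.sum_nonneg fun m _ => htermnn e m
  have hsum_le : ∀ (e : ℕ) (he : e < 15),
      (∑ m : Fin 6, aval e m * x (Fin.castAdd (15 * d) m)) ≤ 1 := by
    intro e he
    have h1 := row0' e he
    have h2 := htnn e
    omega
  have ht01 : ∀ (e : ℕ) (he : e < 15), tval e = 0 ∨ tval e = 1 := by
    intro e he
    have h1 := row0' e he
    have h2 := hsumnn e
    have h3 := htnn e
    omega
  have haval1 : ∀ (E : Sym2 _) (hE : E ∈ Petersen.edgeSet) (m : Fin 6),
      E ∈ (eM m).1.edgeSet → aval ((eE.symm ⟨E, hE⟩ : Fin 15) : ℕ) m = 1 := by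
    intro E hE m hm
    have he : ((eE.symm ⟨E, hE⟩ : Fin 15) : ℕ) < 15 := (eE.symm ⟨E, hE⟩).isLt
    rw [hav _ he m, if_pos ?_]
    have h1 : (⟨((eE.symm ⟨E, hE⟩ : Fin 15) : ℕ), he⟩ : Fin 15) = eE.symm ⟨E, hE⟩ :=
      Fin.ext rfl
    rw [h1, Equiv.apply_symm_apply]
    exact hm
  have hm2 : ∀ m m' : Fin 6, m ≠ m' →
      x (Fin.castAdd (15 * d) m) = 0 ∨ x (Fin.castAdd (15 * d) m') = 0 := by
    intro m m' hne
    by_contra hcon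
    push_neg at hcon
    obtain ⟨hc1, hc2⟩ := hcon
    have hxm : 1 ≤ x (Fin.castAdd (15 * d) m) := by have := hx (Fin.castAdd (15 * d) m); omega
    have hxm' : 1 ≤ x (Fin.castAdd (15 * d) m') := by have := hx (Fin.castAdd (15 * d) m'); omega
    obtain ⟨E, hE1, hE2⟩ := PetersenAux.pm_shared (eM m).1 (eM m').1 (eM m).2 (eM m').2
    have hEG : E ∈ Petersen.edgeSet := SimpleGraph.Subgraph.edgeSet_subset _ hE1
    have ha1 : aval ((eE.symm ⟨E, hEG⟩ : Fin 15) : ℕ) m = 1 := haval1 E hEG m hE1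
    have ha2 : aval ((eE.symm ⟨E, hEG⟩ : Fin 15) : ℕ) m' = 1 := haval1 E hEG m' hE2
    set e : ℕ := ((eE.symm ⟨E, hEG⟩ : Fin 15) : ℕ) with hedef
    have hpair : ∑ i ∈ ({m, m'} : Finset (Fin 6)), aval e i * x (Fin.castAdd (15 * d) i) ≤
        ∑ i : Fin 6, aval e i * x (Fin.castAdd (15 * d) i) :=
      Finset.sum_le_sum_of_subset_of_nonneg (Finset.subset_univ _) (fun i _ _ => htermnn e i)
    rw [Finset.sum_pair hne, ha1, ha2, one_mul, one_mul] at hpair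
    have := hsum_le e (eE.symm ⟨E, hEG⟩).isLt
    omega
  have hT : (10 : ℤ) ≤ ∑ e ∈ Finset.range 15, tval e := by
    by_cases hall : ∀ m : Fin 6, x (Fin.castAdd (15 * d) m) = 0
    · have hone : ∀ e ∈ Finset.range 15, tval e = 1 := by
        intro e he'
        have he : e < 15 := Finset.mem_range.mp he'
        have h1 := row0' e he
        rw [Finset.sum_eq_zero (fun m _ => by rw [hall m, mul_zero])] at h1
        omega
      rw [Finset.sum_congr rfl hone]
      simp
    · push_neg at hall
      obtain ⟨m₀, hm₀⟩ := hall
      have hsub : (Finset.range 15).filter (fun e => tval e = 0) ⊆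
          (Finset.range 15).filter (fun e => aval e m₀ = 1) := by
        intro e he'
        simp only [Finset.mem_filter, Finset.mem_range] at he' ⊢
        obtain ⟨he, ht0⟩ := he'
        refine ⟨he, ?_⟩
        have h1 := row0' e he
        rw [ht0, add_zero] at h1
        by_contra hno
        have hzero : ∀ m ∈ (Finset.univ : Finset (Fin 6)),
            aval e m * x (Fin.castAdd (15 * d) m) = 0 := by
          intro m _
          rcases eq_or_ne m m₀ with rfl | hne
          · have ha0 : aval e m = 0 := by
              rw [hav e he m]
              rw [if_neg ?_]
              intro hmem
              exact hno (by rw [hav e he m, if_pos hmem])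
            rw [ha0, zero_mul]
          · rcases hm2 m m₀ hne with h | h
            · rw [h, mul_zero]
            · exact absurd h hm₀
        rw [Finset.sum_eq_zero hzero] at h1
        exact absurd h1 (by norm_num)
      have hcard5 : ((Finset.range 15).filter (fun e => aval e m₀ = 1)).card ≤ 5 := by
        rw [← PetersenAux.pm_card (eM m₀).1 (eM m₀).2]
        apply Finset.card_le_card_of_injOn
          (fun e => ((eE ⟨e % 15, by omega⟩ : Petersen.edgeSet) : Sym2 _))
        · intro e he'
          simp only [Finset.mem_coe, Finset.mem_filter, Finset.mem_range] at he'
          obtain ⟨he, ha⟩ := he'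
          simp only [Finset.mem_coe]
          rw [Set.Finite.mem_toFinset]
          by_cases hmem : (eE ⟨e, he⟩ : Sym2 _) ∈ (eM m₀).1.edgeSet
          · have hfx : (⟨e % 15, by omega⟩ : Fin 15) = ⟨e, he⟩ := Fin.ext (by simp; omega)
            rw [hfx]
            exact hmem
          · rw [hav e he m₀, if_neg hmem] at ha
            exact absurd ha (by norm_num)
        · intro e₁ h₁ e₂ h₂ heq
          simp only [Finset.coe_filter, Set.mem_setOf_eq, Finset.mem_range] at h₁ h₂
          have h3 : (⟨e₁ % 15, by omega⟩ : Fin 15) = ⟨e₂ % 15, by omega⟩ :=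
            eE.injective (Subtype.coe_injective heq)
          have h4 := congrArg Fin.val h3
          simp only at h4
          omega
      have hcard0 : ((Finset.range 15).filter (fun e => tval e = 0)).card ≤ 5 :=
        le_trans (Finset.card_le_card hsub) hcard5
      have hcards := Finset.card_filter_add_card_filter_not
        (s := Finset.range 15) (p := fun e => tval e = 0)
      have hcard1 : 10 ≤ ((Finset.range 15).filter (fun e => ¬ tval e = 0)).card := by
        rw [Finset.card_range] at hcards
        omega
      have hge1 : ∀ e ∈ (Finset.range 15).filter (fun e => ¬ tval e = 0), (1 : ℤ) ≤ tval e := by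
        intro e he'
        simp only [Finset.mem_filter, Finset.mem_range] at he'
        rcases ht01 e he'.1 with h | h
        · exact absurd h he'.2
        · omega
      have hstep1 : ∑ e ∈ (Finset.range 15).filter (fun e => ¬ tval e = 0), (1 : ℤ) ≤
          ∑ e ∈ (Finset.range 15).filter (fun e => ¬ tval e = 0), tval e :=
        Finset.sum_le_sum hge1
      have hstep2 : ∑ e ∈ (Finset.range 15).filter (fun e => ¬ tval e = 0), tval e ≤
          ∑ e ∈ Finset.range 15, tval e :=
        Finset.sum_le_sum_of_subset_of_nonneg (Finset.filter_subset _ _)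
          (fun e _ _ => htnn e)
      simp only [Finset.sum_const, nsmul_eq_mul, mul_one] at hstep1
      have : (10 : ℤ) ≤ (((Finset.range 15).filter (fun e => ¬ tval e = 0)).card : ℤ) := by
        exact_mod_cast hcard1
      omega
  have hkey : ∀ j, ∀ hjd : j < d, ∀ e, ∀ he : e < 15,
      x ⟨6 + (15 * j + e), by omega⟩ = Δ ^ j * (if Even j then tval e else 1 - tval e) := by
    intro j
    induction j with
    | zero =>
      intro _ e he
      rw [if_pos Even.zero, pow_zero, one_mul, htv e he]
      exact congrArg x (Fin.ext (by simp))
    | succ j ih =>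
      intro hj e he
      have h := StmtAux.rowS' x hsol j e hj he
      have hih := ih (by omega) e he
      rcases Nat.even_or_odd j with hp | hp
      · rw [if_pos hp] at hih
        rw [if_neg (by simp [Nat.even_add_one, hp])]
        linear_combination h - Δ * hih
      · rw [if_neg (Nat.not_even_iff_odd.mpr hp)] at hih
        rw [if_pos (Nat.even_add_one.mpr (Nat.not_even_iff_odd.mpr hp))]
        linear_combination h - Δ * hih
  rw [Fin.sum_univ_add]
  have hA : 0 ≤ ∑ i : Fin 6,
      |(x (Fin.castAdd (15 * d) i) : ℚ) - fracSol d Δ (Fin.castAdd (15 * d) i)| :=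
    Finset.sum_nonneg fun i _ => abs_nonneg _
  have hB : ∑ c' : Fin (15 * d),
      |(x (Fin.natAdd 6 c') : ℚ) - fracSol d Δ (Fin.natAdd 6 c')| =
      ∑ r ∈ Finset.range (15 * d), (Δ : ℚ) ^ (r / 15) * ((tval (r % 15) : ℤ) : ℚ) := by
    rw [← Fin.sum_univ_eq_sum_range (fun r => (Δ : ℚ) ^ (r / 15) * ((tval (r % 15) : ℤ) : ℚ))
      (15 * d)]
    refine Finset.sum_congr rfl fun c' _ => ?_
    have hc := c'.isLt
    have hj : (c' : ℕ) / 15 < d := by omega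
    have he : (c' : ℕ) % 15 < 15 := by omega
    have hidx : Fin.natAdd 6 c' =
        (⟨6 + (15 * ((c' : ℕ) / 15) + (c' : ℕ) % 15), by omega⟩ : Fin (6 + 15 * d)) :=
      Fin.ext (by simp [Fin.coe_natAdd]; omega)
    rw [hidx, hkey _ hj _ he]
    have hfrac : fracSol d Δ ⟨6 + (15 * ((c' : ℕ) / 15) + (c' : ℕ) % 15), by omega⟩ =
        if Odd ((c' : ℕ) / 15) then (Δ : ℚ) ^ ((c' : ℕ) / 15) else 0 := by
      simp only [fracSol]
      rw [if_neg (by simp)]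
      have h5 : (6 + (15 * ((c' : ℕ) / 15) + (c' : ℕ) % 15) - 6) / 15 = (c' : ℕ) / 15 := by
        omega
      simp only [h5]
    rw [hfrac]
    rcases ht01 _ he with h0 | h0 <;> rcases Nat.even_or_odd ((c' : ℕ) / 15) with hp | hp
    · rw [if_pos hp, if_neg (Nat.not_odd_iff_even.mpr hp), h0]
      push_cast
      simp
    · rw [if_neg (Nat.not_even_iff_odd.mpr hp), if_pos hp, h0]
      push_cast
      simp
    · rw [if_pos hp, if_neg (Nat.not_odd_iff_even.mpr hp), h0]
      push_cast
      simp [abs_of_nonneg (pow_nonneg hq0 _)]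
    · rw [if_neg (Nat.not_even_iff_odd.mpr hp), if_pos hp, h0]
      push_cast
      simp [abs_of_nonneg (pow_nonneg hq0 _)]
  rw [hB, StmtAux.sum_block_split (fun r => (Δ : ℚ) ^ (r / 15) * ((tval (r % 15) : ℤ) : ℚ)) d]
  have hinner : ∀ j ∈ Finset.range d,
      ∑ e ∈ Finset.range 15,
        (Δ : ℚ) ^ ((15 * j + e) / 15) * ((tval ((15 * j + e) % 15) : ℤ) : ℚ) =
        (Δ : ℚ) ^ j * ∑ e ∈ Finset.range 15, ((tval e : ℤ) : ℚ) := by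
    intro j _
    rw [Finset.mul_sum]
    refine Finset.sum_congr rfl fun e he' => ?_
    have he := Finset.mem_range.mp he'
    have h1 : (15 * j + e) / 15 = j := by omega
    have h2 : (15 * j + e) % 15 = e := by omega
    rw [h1, h2]
  rw [Finset.sum_congr rfl hinner, ← Finset.sum_mul]
  have hC : (10 : ℚ) ≤ ∑ e ∈ Finset.range 15, ((tval e : ℤ) : ℚ) := by
    have hcast : ((∑ e ∈ Finset.range 15, tval e : ℤ) : ℚ) =
        ∑ e ∈ Finset.range 15, ((tval e : ℤ) : ℚ) := by push_cast; rfl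
    rw [← hcast]
    exact_mod_cast hT
  have hgeo_nonneg : (0 : ℚ) ≤ ∑ j ∈ Finset.range d, (Δ : ℚ) ^ j :=
    Finset.sum_nonneg fun j _ => pow_nonneg hq0 _
  have harith : 13 * (∑ i ∈ Finset.range ((d - 1) / 2), (Δ : ℚ) ^ (2 * i + 1)) ≤
      10 * ∑ j ∈ Finset.range d, (Δ : ℚ) ^ j := by
    have hk2 : (d - 1) / 2 = k := by omega
    rw [hk2, hk, StmtAux.geom_expand]
    have hpt : ∀ i ∈ Finset.range k,
        13 * (Δ : ℚ) ^ (2 * i + 1) ≤ 10 * ((Δ : ℚ) ^ (2 * i + 1) + (Δ : ℚ) ^ (2 * i + 2)) := by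
      intro i _
      have h1 : (0 : ℚ) ≤ (Δ : ℚ) ^ (2 * i + 1) := pow_nonneg hq0 _
      have h2 : 2 * (Δ : ℚ) ^ (2 * i + 1) ≤ (Δ : ℚ) * (Δ : ℚ) ^ (2 * i + 1) :=
        mul_le_mul_of_nonneg_right hq2 h1
      have h3 : (Δ : ℚ) * (Δ : ℚ) ^ (2 * i + 1) = (Δ : ℚ) ^ (2 * i + 2) := by ring
      rw [h3] at h2
      linarith
    have hsnn : (0 : ℚ) ≤ ∑ i ∈ Finset.range k, ((Δ : ℚ) ^ (2 * i + 1) + (Δ : ℚ) ^ (2 * i + 2)) :=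
      Finset.sum_nonneg fun i _ => by positivity
    calc 13 * ∑ i ∈ Finset.range k, (Δ : ℚ) ^ (2 * i + 1)
        = ∑ i ∈ Finset.range k, 13 * (Δ : ℚ) ^ (2 * i + 1) := Finset.mul_sum _ _ _
      _ ≤ ∑ i ∈ Finset.range k, 10 * ((Δ : ℚ) ^ (2 * i + 1) + (Δ : ℚ) ^ (2 * i + 2)) :=
          Finset.sum_le_sum hpt
      _ = 10 * ∑ i ∈ Finset.range k, ((Δ : ℚ) ^ (2 * i + 1) + (Δ : ℚ) ^ (2 * i + 2)) :=
          (Finset.mul_sum _ _ _).symm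
      _ ≤ 10 * (1 + ∑ i ∈ Finset.range k, ((Δ : ℚ) ^ (2 * i + 1) + (Δ : ℚ) ^ (2 * i + 2))) := by
          linarith
  have hBC : 10 * (∑ j ∈ Finset.range d, (Δ : ℚ) ^ j) ≤
      (∑ j ∈ Finset.range d, (Δ : ℚ) ^ j) * (∑ e ∈ Finset.range 15, ((tval e : ℤ) : ℚ)) := by
    rw [mul_comm]
    exact mul_le_mul_of_nonneg_left hC hgeo_nonneg
  linarith [hA, harith, hBC]
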